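/- Let M > 0, let J be a finite index set, and let (ε̌_j, σ̌_j) ∈ ℝ² for j ∈ J be given data points. Then the robust regression objective F(w, v) = Σ_{j ∈ J} φ(w·ε̌_j + v − σ̌_j) attains its minimum over ℝ², provided the strain values ε̌_j, j ∈ J, are not all equal. -/

import Mathlib

/-- The Huber penalty function with threshold `M`. -/
noncomputable def huber (M : ℝ) (t : ℝ) : ℝ :=
  if |t| ≤ M then t ^ 2 else M * (2 * |t| - M)

lemma huber_continuous (M : ℝ) : Continuous (huber M) := by
  unfold huber
  apply Continuous.if_le (by fun_prop) (by fun_prop) continuous_abs continuous_const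
  intro t ht
  have h2 : t ^ 2 = |t| ^ 2 := (sq_abs t).symm
  rw [h2, ht]; ring

lemma huber_nonneg (M : ℝ) (hM : 0 < M) (t : ℝ) : 0 ≤ huber M t := by
  unfold huber
  split_ifs with h
  · positivity
  · push_neg at h
    nlinarith [abs_nonneg t]

lemma huber_lb (M : ℝ) (hM : 0 < M) (t : ℝ) : M * |t| - M ^ 2 ≤ huber M t := by
  unfold huber
  split_ifs with h
  · nlinarith [sq_abs t, abs_nonneg t, sq_nonneg (|t| - M)]
  · push_neg at h
    nlinarith [abs_nonneg t]

set_option maxHeartbeats 1000000 in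
/-- If the strain values `ε̌_j`, `j ∈ J`, are not all equal, then the robust regression
objective `F(w, v) = Σ_j φ(w ε̌_j + v − σ̌_j)` attains its minimum over `ℝ²`. -/
theorem robust_regression_objective_attains_min {ι : Type*} (M : ℝ) (hM : 0 < M)
    (J : Finset ι) (ε σ : ι → ℝ)
    (hε : ∃ j ∈ J, ∃ j' ∈ J, ε j ≠ ε j') :
    ∃ p : ℝ × ℝ, ∀ q : ℝ × ℝ,
      (∑ j ∈ J, huber M (p.1 * ε j + p.2 - σ j)) ≤
        ∑ j ∈ J, huber M (q.1 * ε j + q.2 - σ j) := by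
  obtain ⟨j0, hj0, j1, hj1, hne⟩ := hε
  set F : ℝ × ℝ → ℝ := fun p => ∑ j ∈ J, huber M (p.1 * ε j + p.2 - σ j) with hF
  have hcont : Continuous F := by
    apply continuous_finset_sum
    intro j _
    exact (huber_continuous M).comp (by fun_prop)
  -- constants
  set a : ℝ := |ε j0 - ε j1| with ha
  have ha0 : 0 < a := abs_pos.mpr (sub_ne_zero.mpr hne)
  set D : ℝ := |σ j0 - σ j1| with hD
  set K : ℝ := (1 + |ε j0|) / a + 1 with hK
  have hK0 : 0 < K := by positivity
  set C : ℝ := (1 + |ε j0|) * D / a + |σ j0| with hC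
  have hC0 : 0 ≤ C := by positivity
  -- lower bound: for all p, (M/K) * ‖p‖ - (M*C/K + 2*M^2) ≤ F p
  have key : ∀ p : ℝ × ℝ, M / K * ‖p‖ - (M * C / K + 2 * M ^ 2) ≤ F p := by
    classical
    rintro ⟨w, v⟩
    set t0 : ℝ := w * ε j0 + v - σ j0 with ht0
    set t1 : ℝ := w * ε j1 + v - σ j1 with ht1
    set s : ℝ := |t0| + |t1| with hs
    have hs0 : 0 ≤ s := by positivity
    have hDnn : (0:ℝ) ≤ D := abs_nonneg _
    have hEnn : (0:ℝ) ≤ |ε j0| := abs_nonneg _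
    have hSnn : (0:ℝ) ≤ |σ j0| := abs_nonneg _
    have hwa : |w| * a ≤ s + D := by
      have heq : w * (ε j0 - ε j1) = t0 - t1 + (σ j0 - σ j1) := by rw [ht0, ht1]; ring
      calc |w| * a = |w * (ε j0 - ε j1)| := (abs_mul _ _).symm
        _ = |t0 - t1 + (σ j0 - σ j1)| := by rw [heq]
        _ ≤ |t0 - t1| + |σ j0 - σ j1| := abs_add_le _ _
        _ ≤ (|t0| + |t1|) + D := by gcongr; exact abs_sub _ _
    have hv : |v| ≤ |t0| + |w| * |ε j0| + |σ j0| := by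
      have heq : v = t0 - w * ε j0 + σ j0 := by rw [ht0]; ring
      calc |v| = |t0 - w * ε j0 + σ j0| := by rw [heq]
        _ ≤ |t0 - w * ε j0| + |σ j0| := abs_add_le _ _
        _ ≤ |t0| + |w * ε j0| + |σ j0| := by gcongr; exact abs_sub _ _
        _ = |t0| + |w| * |ε j0| + |σ j0| := by rw [abs_mul]
    have hident : a * (K * s + C) =
        (1 + |ε j0|) * s + a * s + (1 + |ε j0|) * D + a * |σ j0| := by
      rw [hK, hC]; field_simp; ring
    have hbw : |w| ≤ K * s + C := by
      rw [← mul_le_mul_iff_right₀ ha0, hident]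
      nlinarith [mul_nonneg hEnn hs0, mul_nonneg ha0.le hs0,
        mul_nonneg hEnn hDnn, mul_nonneg ha0.le hSnn]
    have hbv : |v| ≤ K * s + C := by
      rw [← mul_le_mul_iff_right₀ ha0, hident]
      have h3 : |t0| ≤ s := by rw [hs]; nlinarith [abs_nonneg t1]
      have h4 : a * |v| ≤ a * (|t0| + |w| * |ε j0| + |σ j0|) :=
        mul_le_mul_of_nonneg_left hv ha0.le
      have h5 : (|w| * a) * |ε j0| ≤ (s + D) * |ε j0| :=
        mul_le_mul_of_nonneg_right hwa hEnn
      have h6 : a * |t0| ≤ a * s := mul_le_mul_of_nonneg_left h3 ha0.le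
      nlinarith [mul_nonneg hEnn hDnn, mul_nonneg hEnn hs0, mul_nonneg ha0.le hs0]
    have hnorm : ‖((w, v) : ℝ × ℝ)‖ ≤ K * s + C := by
      rw [Prod.norm_def]
      exact max_le hbw hbv
    -- F ≥ huber t0 + huber t1 ≥ M*s - 2M²
    have hjne : j0 ≠ j1 := fun h => hne (by rw [h])
    have hsub : ({j0, j1} : Finset ι) ⊆ J := by
      intro x hx
      rcases Finset.mem_insert.mp hx with h | h
      · exact h ▸ hj0
      · exact (Finset.mem_singleton.mp h) ▸ hj1
    have hsum : huber M t0 + huber M t1 ≤ F (w, v) := by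
      have hpair : ∑ j ∈ ({j0, j1} : Finset ι), huber M (w * ε j + v - σ j)
          = huber M t0 + huber M t1 := by
        rw [Finset.sum_pair hjne]
      rw [← hpair]
      exact Finset.sum_le_sum_of_subset_of_nonneg hsub
        (fun j _ _ => huber_nonneg M hM _)
    have hlin : M * s - 2 * M ^ 2 ≤ huber M t0 + huber M t1 := by
      have := huber_lb M hM t0
      have := huber_lb M hM t1
      rw [hs]; nlinarith
    have hfinal : M / K * ‖((w, v) : ℝ × ℝ)‖ - (M * C / K + 2 * M ^ 2) ≤ M * s - 2 * M ^ 2 := by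
      have h5 : M / K * ‖((w, v) : ℝ × ℝ)‖ ≤ M / K * (K * s + C) :=
        mul_le_mul_of_nonneg_left hnorm (by positivity)
      have h6 : M / K * (K * s + C) = M * s + M * C / K := by
        field_simp
      nlinarith
    exact le_trans hfinal (le_trans hlin hsum)
  -- coercivity
  have hcoer : Filter.Tendsto F (Filter.cocompact (ℝ × ℝ)) Filter.atTop := by
    apply Filter.tendsto_atTop_mono key
    have h1 : Filter.Tendsto (fun x : ℝ => M / K * x - (M * C / K + 2 * M ^ 2))
        Filter.atTop Filter.atTop := by
      apply Filter.tendsto_atTop_add_const_right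
      exact Filter.Tendsto.const_mul_atTop (by positivity) Filter.tendsto_id
    exact h1.comp tendsto_norm_cocompact_atTop
  exact hcont.exists_forall_le hcoer
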